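/- Let X₀ and Z be square-integrable ℝᵈ-valued random vectors on a probability space, s ∈ [0, 1), X_s = (1 − s)·X₀ + s·Z, t = arctan(s / (1 − s)), λ = √(s² + (1 − s)²), and let g : ℝᵈ → ℝᵈ be measurable with g(X_s) square-integrable. Then E‖ ((1 − 2s)/λ)·X_s + ((1 − 2s + 2s²)/λ)·g(X_s) − (cos(t)·Z − sin(t)·X₀) ‖² = (s² + (1 − s)²) · E‖ g(X_s) − (Z − X₀) ‖². -/

import Mathlib

open Real MeasureTheory

/-- Let `X₀` and `Z` be square-integrable `ℝᵈ`-valued random vectors on a probability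
space, `s ∈ [0, 1)`, `Xs = (1 − s)·X₀ + s·Z`, `t = arctan (s / (1 − s))`,
`lam = √(s² + (1 − s)²)`, and let `g : ℝᵈ → ℝᵈ` be measurable with `g (Xs ·)`
square-integrable. Then the expected TrigFlow squared loss of the transformed prediction
equals `(s² + (1 − s)²)` times the expected flow-matching squared loss of `g`. -/
theorem expected_trig_sq_loss_eq_rescaled_flow_sq_loss
    {Ω : Type*} [MeasurableSpace Ω] (μ : Measure Ω) [IsProbabilityMeasure μ]
    {d : ℕ} (X₀ Z : Ω → EuclideanSpace ℝ (Fin d))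
    (hX₀m : Measurable X₀) (hZm : Measurable Z)
    (hX₀ : MemLp X₀ 2 μ) (hZ : MemLp Z 2 μ)
    (s : ℝ) (hs : s ∈ Set.Ico (0 : ℝ) 1)
    (Xs : Ω → EuclideanSpace ℝ (Fin d)) (hXs : Xs = fun ω => (1 - s) • X₀ ω + s • Z ω)
    (t : ℝ) (ht : t = arctan (s / (1 - s)))
    (lam : ℝ) (hlam : lam = Real.sqrt (s ^ 2 + (1 - s) ^ 2))
    (g : EuclideanSpace ℝ (Fin d) → EuclideanSpace ℝ (Fin d)) (hg : Measurable g)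
    (hgL2 : MemLp (fun ω => g (Xs ω)) 2 μ) :
    ∫ ω, ‖((1 - 2 * s) / lam) • Xs ω + ((1 - 2 * s + 2 * s ^ 2) / lam) • g (Xs ω) -
        (cos t • Z ω - sin t • X₀ ω)‖ ^ 2 ∂μ =
      (s ^ 2 + (1 - s) ^ 2) * ∫ ω, ‖g (Xs ω) - (Z ω - X₀ ω)‖ ^ 2 ∂μ := by
  obtain ⟨hs0, hs1⟩ := hs
  have h1s : (0 : ℝ) < 1 - s := by linarith
  have hlam2 : lam ^ 2 = s ^ 2 + (1 - s) ^ 2 := by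
    rw [hlam]; exact Real.sq_sqrt (by positivity)
  have hlampos : 0 < lam := by
    rw [hlam]; positivity
  have hsum : 1 + (s / (1 - s)) ^ 2 = (lam / (1 - s)) ^ 2 := by
    field_simp
    linarith [hlam2]
  have hsqrt : Real.sqrt (1 + (s / (1 - s)) ^ 2) = lam / (1 - s) := by
    rw [hsum, Real.sqrt_sq (by positivity)]
  have hcos : Real.cos t = (1 - s) / lam := by
    rw [ht, Real.cos_arctan, hsqrt]
    field_simp
  have hsin : Real.sin t = s / lam := by
    rw [ht, Real.sin_arctan, hsqrt]
    field_simp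
  have key : ∀ ω, ((1 - 2 * s) / lam) • Xs ω + ((1 - 2 * s + 2 * s ^ 2) / lam) • g (Xs ω) -
      (Real.cos t • Z ω - Real.sin t • X₀ ω) = lam • (g (Xs ω) - (Z ω - X₀ ω)) := by
    intro ω
    rw [hXs, hcos, hsin]
    simp only [smul_add, smul_smul]
    match_scalars
    · field_simp; linarith [hlam2]
    · field_simp; linarith [hlam2]
    · field_simp; linarith [hlam2]
  simp only [key]
  have : ∀ ω, ‖lam • (g (Xs ω) - (Z ω - X₀ ω))‖ ^ 2 =
      (s ^ 2 + (1 - s) ^ 2) * ‖g (Xs ω) - (Z ω - X₀ ω)‖ ^ 2 := by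
    intro ω
    rw [norm_smul, Real.norm_eq_abs, mul_pow, sq_abs, hlam2]
  simp only [this]
  rw [integral_const_mul]
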